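/- If f : I → I is a continuous map of a compact interval and x, y are both approximately periodic points, then the pair (x, y) is either asymptotic or distal; i.e., it is not a Li–Yorke pair. -/
import Mathlib


open Set Filter

/-- If `x` and `y` are approximately periodic points of a continuous map of a compact
interval, then the pair `(x,y)` is either asymptotic or distal (hence not Li-Yorke). -/
theorem approx_periodic_pair_asymptotic_or_distal
    {a b : ℝ} (hab : a ≤ b)
    (f : Set.Icc a b → Set.Icc a b) (hf : Continuous f)
    (x y : Set.Icc a b)
    (hx : ∀ ε > (0:ℝ), ∃ p : Set.Icc a b, (∃ m : ℕ, 1 ≤ m ∧ f^[m] p = p) ∧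
      Filter.atTop.limsup (fun n : ℕ => |(f^[n] x : ℝ) - (f^[n] p : ℝ)|) < ε)
    (hy : ∀ ε > (0:ℝ), ∃ p : Set.Icc a b, (∃ m : ℕ, 1 ≤ m ∧ f^[m] p = p) ∧
      Filter.atTop.limsup (fun n : ℕ => |(f^[n] y : ℝ) - (f^[n] p : ℝ)|) < ε) :
    Filter.Tendsto (fun n : ℕ => |(f^[n] x : ℝ) - (f^[n] y : ℝ)|) Filter.atTop (nhds 0) ∨
    0 < Filter.atTop.liminf (fun n : ℕ => |(f^[n] x : ℝ) - (f^[n] y : ℝ)|) := by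
  set h : ℕ → ℝ := fun n => |(f^[n] x : ℝ) - (f^[n] y : ℝ)| with hh
  have hbd : ∀ s t : Set.Icc a b, |(s : ℝ) - (t : ℝ)| ≤ b - a := by
    rintro ⟨s, hs1, hs2⟩ ⟨t, ht1, ht2⟩
    rw [abs_le]
    constructor <;> simp <;> linarith
  by_cases hd : 0 < Filter.atTop.liminf (fun n : ℕ => |(f^[n] x : ℝ) - (f^[n] y : ℝ)|)
  · exact Or.inr hd
  left
  push_neg at hd
  -- frequently small
  have hfreq : ∀ δ > (0:ℝ), ∃ᶠ n in atTop, h n < δ := by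
    intro δ hδ
    refine frequently_lt_of_liminf_lt ?_ (lt_of_le_of_lt hd hδ)
    exact (isBoundedUnder_of ⟨b - a, fun n => hbd _ _⟩).isCoboundedUnder_ge
  -- uniform continuity modulus
  haveI : CompactSpace (Set.Icc a b) := isCompact_iff_compactSpace.mp (isCompact_Icc : IsCompact (Set.Icc a b))
  have hUC : UniformContinuous f := CompactSpace.uniformContinuous_of_continuous hf
  have hmod : ∀ ε > (0:ℝ), ∃ δ > (0:ℝ), ∀ s t : Set.Icc a b,
      |(s : ℝ) - (t : ℝ)| < δ → |(f s : ℝ) - (f t : ℝ)| < ε := by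
    intro ε hε
    obtain ⟨δ, hδ, hd'⟩ := Metric.uniformContinuous_iff.mp hUC ε hε
    refine ⟨δ, hδ, fun s t hst => ?_⟩
    have := hd' (a := s) (b := t) (by rwa [Subtype.dist_eq, Real.dist_eq])
    rwa [Subtype.dist_eq, Real.dist_eq] at this
  -- chain lemma
  have hchain : ∀ ε > (0:ℝ), ∀ k : ℕ, ∃ δ > (0:ℝ),
      ∀ n, h n < δ → ∀ i ≤ k, h (n + i) < ε := by
    intro ε hε k
    induction k with
    | zero =>
      exact ⟨ε, hε, fun n hn i hi => by
        interval_cases i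
        simpa using hn⟩
    | succ k ih =>
      obtain ⟨δ, hδ, hprop⟩ := ih
      obtain ⟨η, hη, hmodη⟩ := hmod δ hδ
      refine ⟨min η ε, lt_min hη hε, ?_⟩
      intro n hn i hi
      match i with
      | 0 => simpa using hn.trans_le (min_le_right _ _)
      | Nat.succ j =>
        have h1 : h (n + 1) < δ := by
          have := hmodη (f^[n] x) (f^[n] y) (hn.trans_le (min_le_left _ _))
          simpa [hh, Function.iterate_succ_apply'] using this
        have := hprop (n + 1) h1 j (Nat.succ_le_succ_iff.mp hi)
        have e : n + 1 + j = n + (j + 1) := by omega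
        rwa [e] at this
  -- main estimate
  rw [NormedAddCommGroup.tendsto_nhds_zero]
  intro ε hε
  have hε5 : (0:ℝ) < ε / 5 := by positivity
  obtain ⟨p, ⟨m₁, hm₁, hp⟩, hxp⟩ := hx (ε / 5) hε5
  obtain ⟨q, ⟨m₂, hm₂, hq⟩, hyq⟩ := hy (ε / 5) hε5
  set M := m₁ * m₂ with hMdef
  have hM : 1 ≤ M := Nat.one_le_iff_ne_zero.mpr (by positivity)
  have hpM : f^[M] p = p := by
    rw [hMdef, Function.iterate_mul]
    exact Function.IsFixedPt.iterate hp m₂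
  have hqM : f^[M] q = q := by
    rw [show M = m₂ * m₁ from Nat.mul_comm m₁ m₂, Function.iterate_mul]
    exact Function.IsFixedPt.iterate hq m₁
  set c : ℕ → ℝ := fun n => |(f^[n] p : ℝ) - (f^[n] q : ℝ)| with hc
  have hcper : ∀ n, c (n + M) = c n := by
    intro n
    simp only [hc, Function.iterate_add_apply, hpM, hqM]
  have hcadd : ∀ t k, c (t + M * k) = c t := by
    intro t k
    induction k with
    | zero => simp
    | succ k ih =>
      have e : t + M * (k + 1) = t + M * k + M := by ring
      rw [e, hcper, ih]
  have hbx : ∀ᶠ n in atTop, |(f^[n] x : ℝ) - (f^[n] p : ℝ)| < ε / 5 :=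
    eventually_lt_of_limsup_lt hxp (isBoundedUnder_of ⟨b - a, fun n => hbd _ _⟩)
  have hby : ∀ᶠ n in atTop, |(f^[n] y : ℝ) - (f^[n] q : ℝ)| < ε / 5 :=
    eventually_lt_of_limsup_lt hyq (isBoundedUnder_of ⟨b - a, fun n => hbd _ _⟩)
  obtain ⟨N, hN⟩ := eventually_atTop.mp (hbx.and hby)
  obtain ⟨δ, hδpos, hδ⟩ := hchain (ε / 5) hε5 (M - 1)
  obtain ⟨n₀, hn₀N, hn₀⟩ := frequently_atTop.mp (hfreq δ hδpos) N
  -- c is small at all residues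
  have hcsmall : ∀ j, c (n₀ + j) < 3 * (ε / 5) := by
    intro j
    have e : n₀ + j = n₀ + j % M + M * (j / M) := by
      conv_lhs => rw [← Nat.mod_add_div j M]
      ring
    rw [e, hcadd]
    have hjM : j % M ≤ M - 1 := by
      have := Nat.mod_lt j (show 0 < M by omega)
      omega
    have h1 : h (n₀ + j % M) < ε / 5 := hδ n₀ hn₀ _ hjM
    have hge : n₀ + j % M ≥ N := Nat.le_trans hn₀N (Nat.le_add_right _ _)
    obtain ⟨h2, h3⟩ := hN _ hge
    set t := n₀ + j % M
    have t1 : |(f^[t] p : ℝ) - (f^[t] q : ℝ)| ≤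
        |(f^[t] p : ℝ) - (f^[t] x : ℝ)| + |(f^[t] x : ℝ) - (f^[t] y : ℝ)|
          + |(f^[t] y : ℝ) - (f^[t] q : ℝ)| := by
      calc |(f^[t] p : ℝ) - (f^[t] q : ℝ)|
          ≤ |(f^[t] p : ℝ) - (f^[t] x : ℝ)| + |(f^[t] x : ℝ) - (f^[t] q : ℝ)| :=
            abs_sub_le _ _ _
        _ ≤ _ := by
            have := abs_sub_le ((f^[t] x : ℝ)) ((f^[t] y : ℝ)) ((f^[t] q : ℝ))
            linarith
    have h2' : |(f^[t] p : ℝ) - (f^[t] x : ℝ)| < ε / 5 := by rwa [abs_sub_comm]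
    simp only [hc]
    have hht : h t < ε / 5 := h1
    simp only [hh] at hht
    linarith
  -- conclude
  rw [eventually_atTop]
  refine ⟨n₀, fun n hn => ?_⟩
  obtain ⟨j, rfl⟩ := Nat.exists_eq_add_of_le hn
  have hge : n₀ + j ≥ N := Nat.le_trans hn₀N (Nat.le_add_right _ _)
  obtain ⟨h2, h3⟩ := hN _ hge
  have hcj := hcsmall j
  set t := n₀ + j
  have t1 : |(f^[t] x : ℝ) - (f^[t] y : ℝ)| ≤
      |(f^[t] x : ℝ) - (f^[t] p : ℝ)| + |(f^[t] p : ℝ) - (f^[t] q : ℝ)|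
        + |(f^[t] q : ℝ) - (f^[t] y : ℝ)| := by
    calc |(f^[t] x : ℝ) - (f^[t] y : ℝ)|
        ≤ |(f^[t] x : ℝ) - (f^[t] p : ℝ)| + |(f^[t] p : ℝ) - (f^[t] y : ℝ)| :=
          abs_sub_le _ _ _
      _ ≤ _ := by
          have := abs_sub_le ((f^[t] p : ℝ)) ((f^[t] q : ℝ)) ((f^[t] y : ℝ))
          linarith
  have h3' : |(f^[t] q : ℝ) - (f^[t] y : ℝ)| < ε / 5 := by rwa [abs_sub_comm]
  simp only [hc] at hcj
  have : |(f^[t] x : ℝ) - (f^[t] y : ℝ)| < ε := by linarith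
  simpa [hh, Real.norm_eq_abs, abs_abs] using this
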